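/- Let K be a finite index set, C > 0, d : K → ℂ with Re d_k ≥ 0, Im d_k ≥ 0 and |d_k| ≤ C for every k ∈ K, and v : K → ℝ with v_k > 0 for every k. For each k define the modified demand d̃_k = min((Re d_k + Im d_k)/√2, C/√2). Then for every S ⊆ K with |Σ_{k∈S} d_k| ≤ C, there exists S' ⊆ K with Σ_{k∈S'} d̃_k ≤ C/√2 and 2 · Σ_{k∈S'} v_k ≥ Σ_{k∈S} v_k. -/

import Mathlib

/-- Splitting lemma: a family of nonnegative numbers, each at most `M`, with
total sum at most `√2 · M`, can be split into two parts each summing to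
at most `M`. -/
lemma algb_split_lemma {K : Type*} [DecidableEq K] (M : ℝ) (hM : 0 ≤ M) (x : K → ℝ)
    (S : Finset K) (h0 : ∀ k ∈ S, 0 ≤ x k) (h1 : ∀ k ∈ S, x k ≤ M)
    (hsum : ∑ k ∈ S, x k ≤ Real.sqrt 2 * M) :
    ∃ T ⊆ S, (∑ k ∈ T, x k ≤ M) ∧ ∑ k ∈ S \ T, x k ≤ M := by
  classical
  set P := S.powerset.filter (fun T => ∑ k ∈ T, x k ≤ M) with hP
  have hne : P.Nonempty := ⟨∅, by simp [hP, hM]⟩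
  obtain ⟨T, hTP, hmax⟩ := P.exists_max_image (fun T => ∑ k ∈ T, x k) hne
  simp only [hP, Finset.mem_filter, Finset.mem_powerset] at hTP
  obtain ⟨hTS, hT1⟩ := hTP
  refine ⟨T, hTS, hT1, ?_⟩
  by_contra hs2
  push_neg at hs2
  -- total sum splits
  have htot : ∑ k ∈ S \ T, x k + ∑ k ∈ T, x k = ∑ k ∈ S, x k := Finset.sum_sdiff hTS
  have hs1nonneg : 0 ≤ ∑ k ∈ T, x k :=
    Finset.sum_nonneg fun k hk => h0 k (hTS hk)
  -- positive elements of S \ T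
  set Q := (S \ T).filter (fun k => 0 < x k) with hQ
  have hQsum : ∑ k ∈ Q, x k = ∑ k ∈ S \ T, x k := by
    apply Finset.sum_filter_of_ne
    intro k hk hne0
    have hk0 : 0 ≤ x k := h0 k (Finset.mem_sdiff.mp hk).1
    exact lt_of_le_of_ne hk0 (Ne.symm hne0)
  -- Q has at least two elements
  have hQcard : 1 < Q.card := by
    by_contra hle
    push_neg at hle
    have : ∑ k ∈ Q, x k ≤ M := by
      rcases Finset.eq_empty_or_nonempty Q with hQe | ⟨b, hb⟩
      · simp [hQe, hM]
      · have hQa : Q = {b} := Finset.eq_singleton_iff_unique_mem.mpr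
          ⟨hb, fun a ha => Finset.card_le_one.mp hle a ha b hb⟩
        have hbS : b ∈ S := (Finset.mem_sdiff.mp (Finset.mem_filter.mp hb).1).1
        simpa [hQa] using h1 b hbS
    rw [hQsum] at this
    linarith
  obtain ⟨k1, hk1Q, k2, hk2Q, hk12⟩ := Finset.one_lt_card.mp hQcard
  have hk1 : k1 ∈ S \ T := (Finset.mem_filter.mp hk1Q).1
  have hk2 : k2 ∈ S \ T := (Finset.mem_filter.mp hk2Q).1
  have hx1 : 0 < x k1 := (Finset.mem_filter.mp hk1Q).2
  have hx2 : 0 < x k2 := (Finset.mem_filter.mp hk2Q).2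
  -- maximality: for positive elements outside T, adding them would exceed M
  have key : ∀ k ∈ S \ T, 0 < x k → M < ∑ j ∈ T, x j + x k := by
    intro k hk hxk
    by_contra hle
    push_neg at hle
    have hknT : k ∉ T := (Finset.mem_sdiff.mp hk).2
    have hkS : k ∈ S := (Finset.mem_sdiff.mp hk).1
    have hmem : insert k T ∈ P := by
      simp only [hP, Finset.mem_filter, Finset.mem_powerset]
      constructor
      · exact Finset.insert_subset hkS hTS
      · rw [Finset.sum_insert hknT]; linarith
    have := hmax _ hmem
    rw [Finset.sum_insert hknT] at this
    linarith
  have hk1' := key k1 hk1 hx1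
  have hk2' := key k2 hk2 hx2
  -- the two elements sum to at most the sum over S \ T
  have hpair : x k1 + x k2 ≤ ∑ k ∈ S \ T, x k := by
    have hsub : ({k1, k2} : Finset K) ⊆ S \ T := by
      intro j hj
      rcases Finset.mem_insert.mp hj with h | h
      · exact h ▸ hk1
      · exact (Finset.mem_singleton.mp h) ▸ hk2
    have := Finset.sum_le_sum_of_subset_of_nonneg hsub
      (fun j hj _ => h0 j (Finset.mem_sdiff.mp hj).1)
    rwa [Finset.sum_pair hk12] at this
  -- arithmetic contradiction
  have hlt : Real.sqrt 2 < 1.5 := by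
    nlinarith [Real.sq_sqrt (show (0:ℝ) ≤ 2 by norm_num), Real.sqrt_nonneg 2]
  have hsM : Real.sqrt 2 * M ≤ 1.5 * M :=
    mul_le_mul_of_nonneg_right hlt.le hM
  linarith

/-- Combinatorial core of Theorem 3: for every feasible C-KP solution `S`,
there is a solution `S'` feasible for the 1-KP instance with modified demands
`d̃_k = min((Re d_k + Im d_k)/√2, C/√2)` and capacity `C/√2` whose value is at
least half the value of `S`. -/
theorem algb_half_approx {K : Type*} [Fintype K] (C : ℝ) (hC : 0 < C)
    (d : K → ℂ) (hre : ∀ k, 0 ≤ (d k).re) (him : ∀ k, 0 ≤ (d k).im)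
    (hmag : ∀ k, ‖d k‖ ≤ C)
    (v : K → ℝ) (hv : ∀ k, 0 < v k)
    (dt : K → ℝ)
    (hdt : ∀ k, dt k = min (((d k).re + (d k).im) / Real.sqrt 2) (C / Real.sqrt 2))
    (S : Finset K) (hS : ‖∑ k ∈ S, d k‖ ≤ C) :
    ∃ S' : Finset K, ∑ k ∈ S', dt k ≤ C / Real.sqrt 2 ∧
      ∑ k ∈ S, v k ≤ 2 * ∑ k ∈ S', v k := by
  classical
  have hs2pos : 0 < Real.sqrt 2 := Real.sqrt_pos.mpr (by norm_num)
  set M := C / Real.sqrt 2 with hMdef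
  have hMpos : 0 < M := div_pos hC hs2pos
  have h0 : ∀ k ∈ S, 0 ≤ dt k := by
    intro k _
    rw [hdt]
    exact le_min (div_nonneg (add_nonneg (hre k) (him k)) hs2pos.le) hMpos.le
  have h1 : ∀ k ∈ S, dt k ≤ M := by
    intro k _
    rw [hdt]
    exact min_le_right _ _
  -- total sum bound
  have hsum : ∑ k ∈ S, dt k ≤ Real.sqrt 2 * M := by
    have h₁ : ∑ k ∈ S, dt k ≤ ∑ k ∈ S, ((d k).re + (d k).im) / Real.sqrt 2 :=
      Finset.sum_le_sum fun k _ => by rw [hdt]; exact min_le_left _ _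
    set z := ∑ k ∈ S, d k with hz
    have h₂ : ∑ k ∈ S, ((d k).re + (d k).im) / Real.sqrt 2
        = (z.re + z.im) / Real.sqrt 2 := by
      rw [hz, Complex.re_sum, Complex.im_sum, ← Finset.sum_add_distrib,
        Finset.sum_div]
    have habs : Real.sqrt 2 * M = C := by
      rw [hMdef]; field_simp
    have hA : z.re + z.im ≤ Real.sqrt 2 * ‖z‖ := by
      have hsq : (z.re + z.im) ^ 2 ≤ (Real.sqrt 2 * ‖z‖) ^ 2 := by
        rw [mul_pow, Real.sq_sqrt (by norm_num : (0:ℝ) ≤ 2)]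
        have h := Complex.sq_norm z
        rw [Complex.normSq_apply] at h
        nlinarith [sq_nonneg (z.re - z.im)]
      have h0' : 0 ≤ z.re + z.im := by
        have hre' : 0 ≤ z.re := by
          rw [hz, Complex.re_sum]; exact Finset.sum_nonneg fun k _ => hre k
        have him' : 0 ≤ z.im := by
          rw [hz, Complex.im_sum]; exact Finset.sum_nonneg fun k _ => him k
        linarith
      have h1' : 0 ≤ Real.sqrt 2 * ‖z‖ :=
        mul_nonneg hs2pos.le (norm_nonneg _)
      nlinarith
    have h₃ : (z.re + z.im) / Real.sqrt 2 ≤ ‖z‖ := by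
      rw [div_le_iff₀ hs2pos]
      calc z.re + z.im ≤ Real.sqrt 2 * ‖z‖ := hA
        _ = ‖z‖ * Real.sqrt 2 := mul_comm _ _
    calc ∑ k ∈ S, dt k ≤ (z.re + z.im) / Real.sqrt 2 := h₂ ▸ h₁
      _ ≤ ‖z‖ := h₃
      _ ≤ C := hS
      _ = Real.sqrt 2 * M := habs.symm
  obtain ⟨T, hTS, hT1, hT2⟩ := algb_split_lemma M hMpos.le dt S h0 h1 hsum
  have hsplit : ∑ k ∈ S \ T, v k + ∑ k ∈ T, v k = ∑ k ∈ S, v k :=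
    Finset.sum_sdiff hTS
  by_cases h : ∑ k ∈ S \ T, v k ≤ ∑ k ∈ T, v k
  · exact ⟨T, hT1, by linarith⟩
  · exact ⟨S \ T, hT2, by linarith⟩
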